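/- In the category of pointed sets, a split mono-retraction pair (p : (1+B,1) → (A,*_A), s : (A,*_A) → (1+B,1)) with s ∘ p = id corresponds to a coherent action (in the ideally exact context Set^op over (Set_*)^op) if and only if s⁻¹(1) = {*_A}. In that case, setting A' = A \ {*_A}, the restrictions p' = p|_B : B → A' and s' = s|_{A'} : A' → B form a split mono-retraction pair of plain sets, and A ≅ 1 + A' as pointed sets compatibly with (p,s). -/

import Mathlib

/-- In pointed sets, a split mono-retraction pair `p : (1+B,1) → (A,*_A)`,
`s : (A,*_A) → (1+B,1)` with `s ∘ p = id` corresponds to a coherent action (in the ideally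
exact context `Set^op` over `(Set_*)^op`) if and only if `s⁻¹(1) = {*_A}`.  In that case,
setting `A' = A \ {*_A}`, the restrictions `p' = p|_B : B → A'` and `s' = s|_{A'} : A' → B`
form a split mono-retraction pair of plain sets, and `A ≅ 1 + A'` as pointed sets
compatibly with `(p, s)`. -/
theorem stmt18 (B A X : Type*) (starA : A) (starX : X)
    (p : Option B → A) (s : A → Option B) (k : A → X)
    (hp : p none = starA) (hs0 : s starA = none) (hsp : ∀ o : Option B, s (p o) = o)
    (hk0 : ∀ o : Option B, k (p o) = starX)
    (hk_eq : ∀ a a' : A, k a = k a' → a = a' ∨ ((∃ o, p o = a) ∧ (∃ o, p o = a')))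
    (hk_surj : Function.Surjective k) :
    -- coherence ↔ `s⁻¹(1) = {*_A}`
    ((∃ f : A → Option X,
        (∀ b : B, f (p (some b)) = some starX) ∧
        (f (p none) = none) ∧
        (∀ a : A, (f a).elim starX id = k a) ∧
        (∀ a : A, f a = none ↔ s a = none))
      ↔ (∀ a : A, s a = none ↔ a = starA)) ∧
    -- in that case, `(p, s)` restricts to a split pair of plain sets and `A ≅ 1 + A'`
    ((∀ a : A, s a = none ↔ a = starA) →
      ∃ (p' : B → {a : A // a ≠ starA}) (s' : {a : A // a ≠ starA} → B),
        (∀ b : B, (p' b : A) = p (some b)) ∧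
        (∀ a : {a : A // a ≠ starA}, s (a : A) = some (s' a)) ∧
        (∀ b : B, s' (p' b) = b) ∧
        ∃ σ : A ≃ Option {a : A // a ≠ starA},
          σ starA = none ∧ ∀ a : {a : A // a ≠ starA}, σ (a : A) = some a) := by
  classical
  have hkstar : k starA = starX := by rw [← hp]; exact hk0 none
  constructor
  · constructor
    · rintro ⟨f, hf1, hf2, hf3, hf4⟩ a
      constructor
      · intro hsa
        have hfa : f a = none := (hf4 a).mpr hsa
        have : k a = k starA := by
          have := hf3 a
          rw [hfa] at this
          simp at this
          rw [← this, hkstar]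
        rcases hk_eq a starA this with h | ⟨⟨o, ho⟩, _⟩
        · exact h
        · have : s a = o := by rw [← ho, hsp]
          rw [this] at hsa
          rw [← ho, hsa, hp]
      · rintro rfl; exact hs0
    · intro hA
      refine ⟨fun a => (s a).map (fun _ => k a), ?_, ?_, ?_, ?_⟩
      · intro b
        show ((s (p (some b))).map _) = _
        rw [hsp]
        simp [hk0]
      · show ((s (p none)).map _) = _
        rw [hsp]; simp
      · intro a
        show ((s a).map _).elim starX id = k a
        rcases h : s a with _ | b
        · simp [Option.elim]
          rw [(hA a).mp h, hkstar]
        · simp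
      · intro a
        show ((s a).map _) = none ↔ _
        simp
  · intro hA
    have hne : ∀ b : B, p (some b) ≠ starA := by
      intro b h
      have := hsp (some b)
      rw [h, hs0] at this
      exact Option.some_ne_none b this.symm
    have hs_some : ∀ a : {a : A // a ≠ starA}, (s (a : A)).isSome := by
      rintro ⟨a, ha⟩
      rcases h : s a with _ | b
      · exact absurd ((hA a).mp h) ha
      · rfl
    refine ⟨fun b => ⟨p (some b), hne b⟩, fun a => (s (a : A)).get (hs_some a),
      fun b => rfl, fun a => (Option.some_get (hs_some a)).symm, ?_, ?_⟩
    · intro b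
      have h : s (p (some b)) = some b := hsp (some b)
      simp only [h, Option.get_some]
    · refine ⟨⟨fun a => if h : a = starA then none else some ⟨a, h⟩,
        fun o => o.elim starA (fun a => (a : A)), ?_, ?_⟩, ?_, ?_⟩
      · intro a
        by_cases h : a = starA <;> simp [h]
      · rintro (_ | ⟨a, ha⟩) <;> simp_all
      · simp
      · rintro ⟨a, ha⟩; simp [ha]
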